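/- Let β : ℝ → ℝ be nondecreasing and let (v_λ) be a family of measurable functions on a finite measure space converging weakly in L² to v, with β(v_λ) converging weakly in L² to ξ, and suppose limsup_{λ→0} ∫ β(v_λ) v_λ ≤ ∫ ξ v. If β is maximal monotone (continuous nondecreasing), then ξ = β(v) almost everywhere. -/

import Mathlib

open MeasureTheory Filter

private lemma l2_mul_integrable {Ω : Type*} [MeasurableSpace Ω] {μ : Measure Ω}
    {f g : Ω → ℝ} (hf : MemLp f 2 μ) (hg : MemLp g 2 μ) :
    Integrable (fun x => f x * g x) μ := by
  have h : MemLp (f • g) 1 μ := hg.smul hf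
  rw [← memLp_one_iff_integrable]
  exact h

theorem maximal_monotone_weak_closure {Ω : Type*} [MeasurableSpace Ω] (μ : Measure Ω)
    [IsFiniteMeasure μ] (β : ℝ → ℝ) (hβcont : Continuous β) (hβmono : Monotone β)
    (vlam : ℝ → Ω → ℝ) (v ξ : Ω → ℝ)
    (hvlam : ∀ lam ∈ Set.Ioi (0:ℝ), MemLp (vlam lam) 2 μ)
    (hβvlam : ∀ lam ∈ Set.Ioi (0:ℝ), MemLp (fun x => β (vlam lam x)) 2 μ)
    (hv : MemLp v 2 μ) (hξ : MemLp ξ 2 μ)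
    (hweak1 : ∀ g : Ω → ℝ, MemLp g 2 μ →
      Tendsto (fun lam => ∫ x, vlam lam x * g x ∂μ) (nhdsWithin 0 (Set.Ioi 0))
        (nhds (∫ x, v x * g x ∂μ)))
    (hweak2 : ∀ g : Ω → ℝ, MemLp g 2 μ →
      Tendsto (fun lam => ∫ x, β (vlam lam x) * g x ∂μ) (nhdsWithin 0 (Set.Ioi 0))
        (nhds (∫ x, ξ x * g x ∂μ)))
    (hlimsup : Filter.limsup (fun lam => ∫ x, β (vlam lam x) * vlam lam x ∂μ)
        (nhdsWithin 0 (Set.Ioi 0)) ≤ ∫ x, ξ x * v x ∂μ) :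
    ∀ᵐ x ∂μ, ξ x = β (v x) := by
  classical
  set l : Filter ℝ := nhdsWithin 0 (Set.Ioi 0) with hl
  set F : ℝ → ℝ := fun lam => ∫ x, β (vlam lam x) * vlam lam x ∂μ with hF
  -- the resolvent map r = (I + β)⁻¹
  set f : ℝ → ℝ := fun t => t + β t with hfdef
  have hfsm : StrictMono f := fun a b hab => by
    have := hβmono hab.le; simp only [hfdef]; linarith
  have hfc : Continuous f := continuous_id.add hβcont
  have h_top : Tendsto f atTop atTop := by
    apply tendsto_atTop_mono' atTop (show ∀ᶠ t in atTop, t + β 0 ≤ f t by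
      filter_upwards [eventually_ge_atTop (0:ℝ)] with t ht
      have := hβmono ht; simp only [hfdef]; linarith)
    exact tendsto_atTop_add_const_right atTop (β 0) tendsto_id
  have h_bot : Tendsto f atBot atBot := by
    apply tendsto_atBot_mono' atBot (show ∀ᶠ t in atBot, f t ≤ t + β 0 by
      filter_upwards [eventually_le_atBot (0:ℝ)] with t ht
      have := hβmono ht; simp only [hfdef]; linarith)
    exact tendsto_atBot_add_const_right atBot (β 0) tendsto_id
  have hfsurj : Function.Surjective f := hfc.surjective h_top h_bot
  set e := StrictMono.orderIsoOfSurjective f hfsm hfsurj with he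
  set r : ℝ → ℝ := fun t => e.symm t with hr
  have hfr : ∀ t, f (r t) = t := fun t =>
    StrictMono.orderIsoOfSurjective_self_symm_apply f hfsm hfsurj t
  have hr_mono : Monotone r := fun a b hab => e.symm.monotone hab
  have hr_lip : ∀ a b, |r a - r b| ≤ |a - b| := by
    have key : ∀ a b, a ≤ b → r b - r a ≤ b - a := by
      intro a b hab
      have h1 : r a ≤ r b := hr_mono hab
      have h2 := hfr a
      have h3 := hfr b
      have h4 : β (r a) ≤ β (r b) := hβmono h1
      simp only [hfdef] at h2 h3
      linarith
    intro a b
    rcases le_total a b with h | h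
    · rw [abs_sub_comm, abs_of_nonneg (sub_nonneg.2 (hr_mono h)),
        abs_sub_comm a b, abs_of_nonneg (sub_nonneg.2 h)]
      exact key a b h
    · rw [abs_of_nonneg (sub_nonneg.2 (hr_mono h)), abs_of_nonneg (sub_nonneg.2 h)]
      exact key b a h
  have hr_cont : Continuous r := OrderIso.continuous e.symm
  -- the test function w
  set s : Ω → ℝ := fun x => v x + ξ x with hs
  have hsmem : MemLp s 2 μ := hv.add hξ
  set w : Ω → ℝ := fun x => r (s x) with hw
  have hw_meas : AEStronglyMeasurable w μ := hr_cont.comp_aestronglyMeasurable hsmem.1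
  have hw_mem : MemLp w 2 μ := by
    refine MemLp.of_le (hsmem.norm.add (memLp_const (abs (r 0)))) hw_meas ?_
    filter_upwards with x
    have h1 : |w x - r 0| ≤ |s x - 0| := hr_lip (s x) 0
    have h2 : |w x| ≤ |w x - r 0| + |r 0| := by
      calc |w x| = |(w x - r 0) + r 0| := by ring_nf
      _ ≤ |w x - r 0| + |r 0| := abs_add_le _ _
    simp only [Pi.add_apply, Real.norm_eq_abs, sub_zero] at *
    rw [abs_of_nonneg (by positivity : (0:ℝ) ≤ |s x| + |r 0|)]
    linarith
  have hid : ∀ x, w x + β (w x) = v x + ξ x := fun x => hfr (s x)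
  have hβw_mem : MemLp (fun x => β (w x)) 2 μ := by
    have heq : (fun x => β (w x)) = fun x => (v x + ξ x) - w x := by
      funext x; have := hid x; linarith
    rw [heq]; exact hsmem.sub hw_mem
  haveI : Fact ((1:ENNReal) ≤ 2) := ⟨one_le_two⟩
  -- inner products in L² are the integrals appearing in the hypotheses
  have key_inner : ∀ (φ : Ω → ℝ) (hφ : MemLp φ 2 μ) (g : Lp ℝ 2 μ),
      (inner ℝ (hφ.toLp φ) g : ℝ) = ∫ x, φ x * (g : Ω → ℝ) x ∂μ := by
    intro φ hφ g
    rw [L2.inner_def]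
    apply integral_congr_ae
    filter_upwards [hφ.coeFn_toLp] with x h1
    simp [h1, RCLike.inner_apply, starRingEnd_apply, mul_comm]
  -- Step A: F is eventually bounded above (Banach–Steinhaus)
  have hFbdd : IsBoundedUnder (· ≤ ·) l F := by
    by_contra hB
    have hfreq : ∀ n : ℕ, ∃ lam, lam ∈ Set.Ioo (0:ℝ) (1/((n:ℝ)+1)) ∧ (n:ℝ) < F lam := by
      intro n
      have h1 : ¬ ∀ᶠ lam in l, F lam ≤ (n:ℝ) := fun h => hB ⟨(n:ℝ), h⟩
      rw [not_eventually] at h1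
      have h2 : Set.Ioo (0:ℝ) (1/((n:ℝ)+1)) ∈ l := by
        apply Ioo_mem_nhdsGT_of_mem
        exact ⟨le_refl _, by positivity⟩
      obtain ⟨lam, hmem, hgt⟩ := (h1.and_eventually (eventually_mem_set.2 h2)).exists
      exact ⟨lam, hgt, lt_of_not_ge hmem⟩
    choose lam hlam1 hlam2 using hfreq
    have hlam_pos : ∀ n, lam n ∈ Set.Ioi (0:ℝ) := fun n => (hlam1 n).1
    have hlam_tend : Tendsto lam atTop l := by
      rw [hl, tendsto_nhdsWithin_iff]
      refine ⟨?_, Eventually.of_forall hlam_pos⟩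
      apply squeeze_zero (fun n => (hlam1 n).1.le) (fun n => (hlam1 n).2.le)
      exact tendsto_one_div_add_atTop_nhds_zero_nat
    set B : ℕ → Lp ℝ 2 μ := fun n => ((hβvlam (lam n) (hlam_pos n)).toLp _) with hB2
    set V : ℕ → Lp ℝ 2 μ := fun n => ((hvlam (lam n) (hlam_pos n)).toLp _) with hV2
    obtain ⟨C1, hC1⟩ := banach_steinhaus (g := fun n => innerSL ℝ (B n)) (by
      intro g
      have ht := (hweak2 _ (Lp.memLp g)).comp hlam_tend
      have ht2 : Tendsto (fun n => ‖(innerSL ℝ (B n)) g‖) atTop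
          (nhds ‖∫ x, ξ x * (g : Ω → ℝ) x ∂μ‖) := by
        apply (ht.norm).congr
        intro n
        simp only [Function.comp_apply, innerSL_apply_apply, hB2]
        rw [key_inner _ (hβvlam (lam n) (hlam_pos n)) g]
      obtain ⟨C, hC⟩ := ht2.bddAbove_range
      exact ⟨C, fun n => hC (Set.mem_range_self n)⟩)
    obtain ⟨C2, hC2⟩ := banach_steinhaus (g := fun n => innerSL ℝ (V n)) (by
      intro g
      have ht := (hweak1 _ (Lp.memLp g)).comp hlam_tend
      have ht2 : Tendsto (fun n => ‖(innerSL ℝ (V n)) g‖) atTop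
          (nhds ‖∫ x, v x * (g : Ω → ℝ) x ∂μ‖) := by
        apply (ht.norm).congr
        intro n
        simp only [Function.comp_apply, innerSL_apply_apply, hV2]
        rw [key_inner _ (hvlam (lam n) (hlam_pos n)) g]
      obtain ⟨C, hC⟩ := ht2.bddAbove_range
      exact ⟨C, fun n => hC (Set.mem_range_self n)⟩)
    have hC1' : ∀ n, ‖B n‖ ≤ C1 := by
      intro n
      have := hC1 n
      rwa [innerSL_apply_norm] at this
    have hC2' : ∀ n, ‖V n‖ ≤ C2 := by
      intro n
      have := hC2 n
      rwa [innerSL_apply_norm] at this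
    have hFn : ∀ n, F (lam n) ≤ C1 * C2 := by
      intro n
      have h1 : F (lam n) = (inner ℝ (B n) (V n) : ℝ) := by
        rw [hB2]
        rw [key_inner _ (hβvlam (lam n) (hlam_pos n)) (V n)]
        apply integral_congr_ae
        filter_upwards [(hvlam (lam n) (hlam_pos n)).coeFn_toLp] with x hx
        rw [show ((V n : Lp ℝ 2 μ) : Ω → ℝ) x = vlam (lam n) x from hx]
      rw [h1]
      calc (inner ℝ (B n) (V n) : ℝ) ≤ ‖B n‖ * ‖V n‖ := real_inner_le_norm _ _
        _ ≤ C1 * C2 := by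
            have h0 : (0:ℝ) ≤ C1 := (norm_nonneg (B 0)).trans (hC1' 0)
            exact mul_le_mul (hC1' n) (hC2' n) (norm_nonneg _) h0
    obtain ⟨n, hn⟩ := exists_nat_gt (C1 * C2)
    have := hlam2 n
    have := hFn n
    linarith
  -- Step B: Minty's trick with the special test function w
  have iξw : Integrable (fun x => ξ x * w x) μ := l2_mul_integrable hξ hw_mem
  have ivβw : Integrable (fun x => v x * β (w x)) μ := l2_mul_integrable hv hβw_mem
  have iβww : Integrable (fun x => β (w x) * w x) μ := l2_mul_integrable hβw_mem hw_mem
  have iξv : Integrable (fun x => ξ x * v x) μ := l2_mul_integrable hξ hv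
  set L : ℝ := (∫ x, ξ x * w x ∂μ) + (∫ x, v x * β (w x) ∂μ) - ∫ x, β (w x) * w x ∂μ with hL
  set G : ℝ → ℝ := fun lam => (∫ x, β (vlam lam x) * w x ∂μ)
      + (∫ x, vlam lam x * β (w x) ∂μ) - ∫ x, β (w x) * w x ∂μ with hG
  have hGt : Tendsto G l (nhds L) := by
    rw [hG, hL]
    exact ((hweak2 w hw_mem).add (hweak1 _ hβw_mem)).sub_const _
  have hFG : ∀ᶠ lam in l, G lam ≤ F lam := by
    filter_upwards [self_mem_nhdsWithin] with lam hlam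
    have ia : MemLp (fun x => β (vlam lam x)) 2 μ := hβvlam lam hlam
    have ib : MemLp (vlam lam) 2 μ := hvlam lam hlam
    have i1 : Integrable (fun x => β (vlam lam x) * vlam lam x) μ := l2_mul_integrable ia ib
    have i2 : Integrable (fun x => β (vlam lam x) * w x) μ := l2_mul_integrable ia hw_mem
    have i3 : Integrable (fun x => vlam lam x * β (w x)) μ := l2_mul_integrable ib hβw_mem
    have hnn : (0:ℝ) ≤ ∫ x, (β (vlam lam x) - β (w x)) * (vlam lam x - w x) ∂μ := by
      apply integral_nonneg
      intro x
      show (0:ℝ) ≤ (β (vlam lam x) - β (w x)) * (vlam lam x - w x)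
      rcases le_total (vlam lam x) (w x) with h | h
      · have heq : (β (vlam lam x) - β (w x)) * (vlam lam x - w x)
            = (β (w x) - β (vlam lam x)) * (w x - vlam lam x) := by ring
        rw [heq]
        exact mul_nonneg (sub_nonneg.2 (hβmono h)) (sub_nonneg.2 h)
      · exact mul_nonneg (sub_nonneg.2 (hβmono h)) (sub_nonneg.2 h)
    have hexp : ∫ x, (β (vlam lam x) - β (w x)) * (vlam lam x - w x) ∂μ
        = (∫ x, β (vlam lam x) * vlam lam x ∂μ) - (∫ x, β (vlam lam x) * w x ∂μ)
          - ((∫ x, vlam lam x * β (w x) ∂μ) - ∫ x, β (w x) * w x ∂μ) := by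
      calc ∫ x, (β (vlam lam x) - β (w x)) * (vlam lam x - w x) ∂μ
          = ∫ x, ((β (vlam lam x) * vlam lam x - β (vlam lam x) * w x)
              - (vlam lam x * β (w x) - β (w x) * w x)) ∂μ := by
            apply integral_congr_ae
            filter_upwards with x
            ring
        _ = (∫ x, (β (vlam lam x) * vlam lam x - β (vlam lam x) * w x) ∂μ)
              - ∫ x, (vlam lam x * β (w x) - β (w x) * w x) ∂μ :=
            integral_sub (i1.sub i2) (i3.sub iβww)
        _ = (∫ x, β (vlam lam x) * vlam lam x ∂μ) - (∫ x, β (vlam lam x) * w x ∂μ)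
              - ((∫ x, vlam lam x * β (w x) ∂μ) - ∫ x, β (w x) * w x ∂μ) := by
            rw [integral_sub i1 i2, integral_sub i3 iβww]
    rw [hexp] at hnn
    simp only [hG, hF]
    linarith
  have hLle : L ≤ ∫ x, ξ x * v x ∂μ := by
    have h1 : limsup G l = L := hGt.limsup_eq
    have h2 : limsup G l ≤ limsup F l :=
      limsup_le_limsup hFG (hGt.isBoundedUnder_ge.isCoboundedUnder_le) hFbdd
    rw [h1] at h2
    exact h2.trans hlimsup
  -- conclude v = w a.e.
  have isq : Integrable (fun x => (v x - w x)^2) μ := by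
    have heq : (fun x => (v x - w x)^2) = fun x => (v x - w x) * (v x - w x) := by
      funext x; ring
    rw [heq]; exact l2_mul_integrable (hv.sub hw_mem) (hv.sub hw_mem)
  have hIeq : ∫ x, (v x - w x)^2 ∂μ = L - ∫ x, ξ x * v x ∂μ := by
    have hpt : ∀ x, (v x - w x)^2
        = (ξ x * w x + v x * β (w x) - β (w x) * w x) - ξ x * v x := by
      intro x
      have hb : β (w x) = v x + ξ x - w x := by have := hid x; linarith
      rw [hb]; ring
    calc ∫ x, (v x - w x)^2 ∂μ
        = ∫ x, ((ξ x * w x + v x * β (w x) - β (w x) * w x) - ξ x * v x) ∂μ :=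
          integral_congr_ae (Eventually.of_forall hpt)
      _ = (∫ x, (ξ x * w x + v x * β (w x) - β (w x) * w x) ∂μ) - ∫ x, ξ x * v x ∂μ :=
          integral_sub ((iξw.add ivβw).sub iβww) iξv
      _ = ((∫ x, (ξ x * w x + v x * β (w x)) ∂μ) - ∫ x, β (w x) * w x ∂μ)
            - ∫ x, ξ x * v x ∂μ :=
          congrArg (fun t => t - ∫ x, ξ x * v x ∂μ) (integral_sub (iξw.add ivβw) iβww)
      _ = L - ∫ x, ξ x * v x ∂μ :=
          congrArg (fun t => (t - ∫ x, β (w x) * w x ∂μ) - ∫ x, ξ x * v x ∂μ)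
            (integral_add iξw ivβw)
  have hI0 : ∫ x, (v x - w x)^2 ∂μ = 0 := by
    have hnn : (0:ℝ) ≤ ∫ x, (v x - w x)^2 ∂μ := integral_nonneg fun x => sq_nonneg _
    have hle : ∫ x, (v x - w x)^2 ∂μ ≤ 0 := by rw [hIeq]; linarith
    linarith
  have hvw : ∀ᵐ x ∂μ, v x = w x := by
    have h := (integral_eq_zero_iff_of_nonneg (fun x => sq_nonneg (v x - w x)) isq).1 hI0
    filter_upwards [h] with x hx
    have : (v x - w x)^2 = 0 := hx
    have := pow_eq_zero_iff (two_ne_zero) |>.1 this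
    linarith
  filter_upwards [hvw] with x hx
  have h1 := hid x
  rw [← hx] at h1
  linarith
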